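/- arXiv:2201.07033 — 7 statements merged into one kernel-verified Lean document; each statement's English description precedes it below -/
import Mathlib

section
/- Let (g,h,ρ) be a LieAct triple over a field k and let D: g → h be a relative difference operator. Define ρ_D: g → End(h) by ρ_D(x)(u) = ρ(x)u + ⁅D x, u⁆_h. Then ρ_D is a representation of the Lie algebra g on h, i.e. ρ_D(⁅x,y⁆_g) = ρ_D(x)∘ρ_D(y) − ρ_D(y)∘ρ_D(x) as linear endomorphisms of h, for all x,y ∈ g. -/
/-- Given an action `ρ` of `g` on `h` and a linear map `D : g → h`, the map
`ρ_D(x)(u) = ρ(x)u + ⁅D x, u⁆`. -/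
def rhoD {k : Type*} [Field k] {g h : Type*}
    [LieRing g] [LieAlgebra k g] [LieRing h] [LieAlgebra k h]
    (ρ : g →ₗ[k] Module.End k h) (D : g →ₗ[k] h) (x : g) (u : h) : h :=
  ρ x u + ⁅D x, u⁆

/-- If `(g, h, ρ)` is a LieAct triple and `D : g → h` is a relative difference operator, then
`ρ_D(x)(u) = ρ(x)u + ⁅D x, u⁆` is a representation of the Lie algebra `g` on `h`. -/
theorem rhoD_isRepresentation {k : Type*} [Field k] {g h : Type*}
    [LieRing g] [LieAlgebra k g] [LieRing h] [LieAlgebra k h]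
    (ρ : g →ₗ[k] Module.End k h)
    (hder : ∀ (x : g) (u v : h), ρ x ⁅u, v⁆ = ⁅ρ x u, v⁆ + ⁅u, ρ x v⁆)
    (hhom : ∀ x y : g, ρ ⁅x, y⁆ = ρ x ∘ₗ ρ y - ρ y ∘ₗ ρ x)
    (D : g →ₗ[k] h)
    (hD : ∀ x y : g, D ⁅x, y⁆ = ρ x (D y) - ρ y (D x) + ⁅D x, D y⁆) :
    ∀ (x y : g) (u : h),
      rhoD ρ D ⁅x, y⁆ u = rhoD ρ D x (rhoD ρ D y u) - rhoD ρ D y (rhoD ρ D x u) := by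
  intro x y u
  simp only [rhoD, hD, hhom, map_add, hder, LinearMap.sub_apply, LinearMap.comp_apply,
    add_lie, sub_lie, lie_add, lie_sub, lie_lie, map_sub]
  abel
end

section
/- Let (g,D) be a difference Lie algebra over a field k, let ω: g × g → g be an alternating bilinear map and D̂: g → g a linear map. On the product space g × g (modelling k[t]/(t²) ⊗ g via (a,b) ↔ a + t b) define the deformed bracket B((a,b),(c,d)) = (⁅a,c⁆, ⁅a,d⁆ + ⁅b,c⁆ + ω(a,c)) and the deformed operator 𝔇(a,b) = (D a, D b + D̂ a). Then B satisfies the Jacobi identity B(B(X,Y),Z) + B(B(Y,Z),X) + B(B(Z,X),Y) = 0 for all X,Y,Z ∈ g × g, and 𝔇 satisfies the difference identity 𝔇(B(X,Y)) = B(𝔇X, Y) + B(X, 𝔇Y) + B(𝔇X, 𝔇Y) for all X,Y ∈ g × g, if and only if the pair (ω,D̂) is a 2-cocycle, i.e. for all x,y,z ∈ g: (i) ⁅ω(x,y),z⁆ + ⁅ω(y,z),x⁆ + ⁅ω(z,x),y⁆ + ω(⁅x,y⁆,z) + ω(⁅y,z⁆,x) + ω(⁅z,x⁆,y) = 0, and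 (ii) ⁅D̂x, y⁆ + ⁅x, D̂y⁆ + ⁅D̂x, Dy⁆ + ⁅Dx, D̂y⁆ − D̂(⁅x,y⁆) + ω(Dx,y) + ω(x,Dy) + ω(Dx,Dy) − D(ω(x,y)) = 0. -/
section

variable {g : Type*} [LieRing g]

/-- The deformed bracket on `g × g ≅ k[t]/(t²) ⊗ g`:
`B((a,b),(c,d)) = (⁅a,c⁆, ⁅a,d⁆ + ⁅b,c⁆ + ω(a,c))`. -/
def deformedBracket (ω : g → g → g) (X Y : g × g) : g × g :=
  (⁅X.1, Y.1⁆, ⁅X.1, Y.2⁆ + ⁅X.2, Y.1⁆ + ω X.1 Y.1)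

/-- The deformed operator on `g × g ≅ k[t]/(t²) ⊗ g`: `𝔇(a,b) = (D a, D b + D̂ a)`. -/
def deformedOp (D Dh : g → g) (X : g × g) : g × g :=
  (D X.1, D X.2 + Dh X.1)

/-- Jacobi identity in the "brackets on the left" form. -/
lemma jacL (x y z : g) : ⁅⁅x, y⁆, z⁆ + ⁅⁅y, z⁆, x⁆ + ⁅⁅z, x⁆, y⁆ = 0 := by
  have h := lie_jacobi z x y
  rw [(lie_skew ⁅x, y⁆ z).symm, (lie_skew ⁅y, z⁆ x).symm, (lie_skew ⁅z, x⁆ y).symm]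
  linear_combination (norm := abel) -h

end

/-- For a difference Lie algebra `(g, D)`, an alternating bilinear `ω` and a linear `D̂`,
the pair `(ω, D̂)` generates an infinitesimal deformation (i.e. the deformed bracket `B`
satisfies the Jacobi identity and the deformed operator `𝔇` is a difference operator for it)
if and only if `(ω, D̂)` is a 2-cocycle. -/
theorem infinitesimal_deformation_iff_two_cocycle {k : Type*} [Field k] {g : Type*}
    [LieRing g] [LieAlgebra k g]
    (D : g →ₗ[k] g)
    (hD : ∀ x y : g, D ⁅x, y⁆ = ⁅D x, y⁆ + ⁅x, D y⁆ + ⁅D x, D y⁆)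
    (ω : g →ₗ[k] g →ₗ[k] g) (hω : ∀ x : g, ω x x = 0)
    (Dh : g →ₗ[k] g) :
    ((∀ X Y Z : g × g,
        deformedBracket (fun a b => ω a b) (deformedBracket (fun a b => ω a b) X Y) Z +
        deformedBracket (fun a b => ω a b) (deformedBracket (fun a b => ω a b) Y Z) X +
        deformedBracket (fun a b => ω a b) (deformedBracket (fun a b => ω a b) Z X) Y = 0) ∧
     (∀ X Y : g × g,
        deformedOp ⇑D ⇑Dh (deformedBracket (fun a b => ω a b) X Y) =
        deformedBracket (fun a b => ω a b) (deformedOp ⇑D ⇑Dh X) Y +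
        deformedBracket (fun a b => ω a b) X (deformedOp ⇑D ⇑Dh Y) +
        deformedBracket (fun a b => ω a b) (deformedOp ⇑D ⇑Dh X) (deformedOp ⇑D ⇑Dh Y))) ↔
    ((∀ x y z : g,
        ⁅ω x y, z⁆ + ⁅ω y z, x⁆ + ⁅ω z x, y⁆ +
        ω ⁅x, y⁆ z + ω ⁅y, z⁆ x + ω ⁅z, x⁆ y = 0) ∧
     (∀ x y : g,
        ⁅Dh x, y⁆ + ⁅x, Dh y⁆ + ⁅Dh x, D y⁆ + ⁅D x, Dh y⁆ - Dh ⁅x, y⁆ +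
        ω (D x) y + ω x (D y) + ω (D x) (D y) - D (ω x y) = 0)) := by
  constructor
  · rintro ⟨hJ, hO⟩
    constructor
    · intro x y z
      have h := hJ (x, 0) (y, 0) (z, 0)
      simp only [deformedBracket, Prod.mk_add_mk, Prod.ext_iff, Prod.mk_eq_zero, Prod.fst_zero, Prod.snd_zero,
        lie_zero, zero_lie, add_zero, zero_add] at h
      linear_combination (norm := abel) h.2
    · intro x y
      have h := hO (x, 0) (y, 0)
      simp only [deformedOp, deformedBracket, Prod.mk_add_mk, Prod.ext_iff,
        map_zero, lie_zero, zero_lie, add_zero, zero_add] at h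
      linear_combination (norm := abel) -h.2
  · rintro ⟨h1, h2⟩
    constructor
    · rintro ⟨a, b⟩ ⟨c, d⟩ ⟨e, f⟩
      simp only [deformedBracket, Prod.mk_add_mk, Prod.ext_iff, Prod.mk_eq_zero, Prod.fst_zero, Prod.snd_zero,
        add_lie, lie_add]
      constructor
      · exact jacL a c e
      · linear_combination (norm := abel) jacL a c f + jacL b c e + jacL a d e + h1 a c e
    · rintro ⟨a, b⟩ ⟨c, d⟩
      simp only [deformedOp, deformedBracket, Prod.mk_add_mk, Prod.ext_iff,
        map_add, add_lie, lie_add]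
      constructor
      · exact hD a c
      · linear_combination (norm := abel) hD a d + hD b c - h2 a c
end

section
/- Let (g,D) be a difference Lie algebra over a field k, let ω₁, ω₂: g × g → g be alternating bilinear maps, D̂₁, D̂₂: g → g linear maps, and N: g → g a linear map. On g × g define, for i = 1,2, the deformed brackets B_i((a,b),(c,d)) = (⁅a,c⁆, ⁅a,d⁆ + ⁅b,c⁆ + ω_i(a,c)) and operators 𝔇_i(a,b) = (D a, D b + D̂_i a), and define φ(a,b) = (a, N a + b) (modelling φ_t = Id + tN). Then φ(B₁(X,Y)) = B₂(φ(X), φ(Y)) for all X,Y ∈ g × g and 𝔇₂ ∘ φ = φ ∘ 𝔇₁, if and only if for all x,y ∈ g: ω₁(x,y) − ω₂(x,y) = ⁅N x, y⁆ + ⁅x, N y⁆ − N(⁅x,y⁆) and D̂₁(x) − D̂₂(x) = D(N x) − N(D x); that is, the two infinitesimal deformations are equivalent via Id + tN if and only if the 2-cocycles (ω₁,D̂₁) and (ω₂,D̂₂) differ by the coboundary of N. -/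
section

variable {g : Type*} [LieRing g]

/-- The map `φ(a,b) = (a, N a + b)`, modelling `φ_t = Id + t N`. -/
def phiN (N : g → g) (X : g × g) : g × g :=
  (X.1, N X.1 + X.2)

end

/-- Two infinitesimal deformations of a difference Lie algebra `(g, D)`, generated by
`(ω₁, D̂₁)` and `(ω₂, D̂₂)`, are equivalent via `φ_t = Id + t N` if and only if the
2-cocycles `(ω₁, D̂₁)` and `(ω₂, D̂₂)` differ by the coboundary of `N`. -/
theorem deformation_equivalence_iff_coboundary {k : Type*} [Field k] {g : Type*}
    [LieRing g] [LieAlgebra k g]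
    (D : g →ₗ[k] g)
    (hD : ∀ x y : g, D ⁅x, y⁆ = ⁅D x, y⁆ + ⁅x, D y⁆ + ⁅D x, D y⁆)
    (ω₁ ω₂ : g →ₗ[k] g →ₗ[k] g) (hω₁ : ∀ x : g, ω₁ x x = 0) (hω₂ : ∀ x : g, ω₂ x x = 0)
    (Dh₁ Dh₂ : g →ₗ[k] g) (N : g →ₗ[k] g) :
    ((∀ X Y : g × g,
        phiN ⇑N (deformedBracket (fun a b => ω₁ a b) X Y) =
        deformedBracket (fun a b => ω₂ a b) (phiN ⇑N X) (phiN ⇑N Y)) ∧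
     (∀ X : g × g, deformedOp ⇑D ⇑Dh₂ (phiN ⇑N X) = phiN ⇑N (deformedOp ⇑D ⇑Dh₁ X))) ↔
    ((∀ x y : g, ω₁ x y - ω₂ x y = ⁅N x, y⁆ + ⁅x, N y⁆ - N ⁅x, y⁆) ∧
     (∀ x : g, Dh₁ x - Dh₂ x = D (N x) - N (D x))) := by
  constructor
  · rintro ⟨h1, h2⟩
    constructor
    · intro x y
      have := congrArg Prod.snd (h1 (x, 0) (y, 0))
      simp [phiN, deformedBracket] at this
      linear_combination (norm := module) this
    · intro x
      have := congrArg Prod.snd (h2 (x, 0))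
      simp [phiN, deformedOp] at this
      linear_combination (norm := module) -this
  · rintro ⟨h1, h2⟩
    constructor
    · rintro ⟨a, b⟩ ⟨c, d⟩
      have := h1 a c
      simp only [phiN, deformedBracket, Prod.mk.injEq]
      refine ⟨trivial, ?_⟩
      simp only [lie_add, add_lie]
      linear_combination (norm := module) this
    · rintro ⟨a, b⟩
      have := h2 a
      simp only [phiN, deformedOp, Prod.mk.injEq]
      refine ⟨trivial, ?_⟩
      simp only [map_add]
      linear_combination (norm := module) -this
end

section
/- Let (g,D) be a difference Lie algebra over a field k and let (V,ϱ,K) be a representation of (g,D). Define a bilinear bracket on g × V by B((x,u),(y,v)) = (⁅x,y⁆, ϱ(x)v − ϱ(y)u) and a linear map Δ(x,u) = (D x, K u). Then B is alternating and satisfies the Jacobi identity B(B(X,Y),Z) + B(B(Y,Z),X) + B(B(Z,X),Y) = 0 for all X,Y,Z ∈ g × V, and Δ is a difference operator for this bracket: Δ(B(X,Y)) = B(ΔX, Y) + B(X, ΔY) + B(ΔX, ΔY) for all X,Y ∈ g × V. Thus (g ⊕ V, B, Δ) is a difference Lie algebra, the semidirect product of (g,D) with (V,ϱ,K). -/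
section

variable {k : Type*} [Field k] {g : Type*} [LieRing g] [LieAlgebra k g]
  {V : Type*} [AddCommGroup V] [Module k V]

/-- The semidirect product bracket on `g × V`:
`B((x,u),(y,v)) = (⁅x,y⁆, ϱ(x)v − ϱ(y)u)`. -/
def sdpBracket (ϱ : g →ₗ[k] Module.End k V) (X Y : g × V) : g × V :=
  (⁅X.1, Y.1⁆, ϱ X.1 Y.2 - ϱ Y.1 X.2)

/-- The semidirect product operator on `g × V`: `Δ(x,u) = (D x, K u)`. -/
def sdpOp (D : g →ₗ[k] g) (K : V →ₗ[k] V) (X : g × V) : g × V :=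
  (D X.1, K X.2)

end

/-- For a difference Lie algebra `(g, D)` and a representation `(V, ϱ, K)`, the semidirect
product bracket `B` on `g ⊕ V` is alternating and satisfies the Jacobi identity, and
`Δ(x,u) = (D x, K u)` is a difference operator for it; thus `(g ⊕ V, B, Δ)` is a difference
Lie algebra, the semidirect product of `(g, D)` with `(V, ϱ, K)`. -/
theorem semidirectProduct_is_difference_lie_algebra {k : Type*} [Field k] {g : Type*}
    [LieRing g] [LieAlgebra k g] {V : Type*} [AddCommGroup V] [Module k V]
    (D : g →ₗ[k] g)
    (hD : ∀ x y : g, D ⁅x, y⁆ = ⁅D x, y⁆ + ⁅x, D y⁆ + ⁅D x, D y⁆)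
    (ϱ : g →ₗ[k] Module.End k V)
    (hrep : ∀ x y : g, ϱ ⁅x, y⁆ = ϱ x ∘ₗ ϱ y - ϱ y ∘ₗ ϱ x)
    (K : V →ₗ[k] V)
    (hK : ∀ (x : g) (u : V), K (ϱ x u) = ϱ (D x) u + ϱ x (K u) + ϱ (D x) (K u)) :
    (∀ X : g × V, sdpBracket ϱ X X = 0) ∧
    (∀ X Y Z : g × V,
      sdpBracket ϱ (sdpBracket ϱ X Y) Z + sdpBracket ϱ (sdpBracket ϱ Y Z) X +
        sdpBracket ϱ (sdpBracket ϱ Z X) Y = 0) ∧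
    (∀ X Y : g × V,
      sdpOp D K (sdpBracket ϱ X Y) =
        sdpBracket ϱ (sdpOp D K X) Y + sdpBracket ϱ X (sdpOp D K Y) +
          sdpBracket ϱ (sdpOp D K X) (sdpOp D K Y)) := by
  refine ⟨?_, ?_, ?_⟩
  · intro X
    simp [sdpBracket, Prod.ext_iff]
  · rintro ⟨x, u⟩ ⟨y, v⟩ ⟨z, w⟩
    have h1 : ⁅⁅x, y⁆, z⁆ + ⁅⁅y, z⁆, x⁆ + ⁅⁅z, x⁆, y⁆ = 0 := by
      have h2 := lie_jacobi x y z
      rw [← lie_skew x ⁅y, z⁆, ← lie_skew y ⁅z, x⁆, ← lie_skew z ⁅x, y⁆,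
        ← neg_add, ← neg_add, neg_eq_zero] at h2
      rw [← h2]
      abel
    have hr : ∀ a b : g, ∀ w : V, ϱ ⁅a, b⁆ w = ϱ a (ϱ b w) - ϱ b (ϱ a w) := by
      intro a b w
      rw [hrep]
      rfl
    simp only [sdpBracket, Prod.mk_add_mk, Prod.mk_eq_zero, map_sub, LinearMap.sub_apply, hr, h1]
    constructor
    · trivial
    · abel
  · rintro ⟨x, u⟩ ⟨y, v⟩
    simp only [sdpBracket, sdpOp, Prod.mk_add_mk, Prod.ext_iff, hD, map_sub, hK]
    constructor
    · trivial
    · abel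
end

section
/- Let (ĝ, D̂) and (g, D) be difference Lie algebras over a field k and let p: ĝ → g be a surjective Lie algebra homomorphism with p ∘ D̂ = D ∘ p, such that the kernel 𝔥 = ker p is abelian (⁅u,v⁆ = 0 for all u,v ∈ 𝔥) and D̂(𝔥) ⊆ 𝔥 (an abelian extension of (g,D)). Let s: g → ĝ be a linear section, p ∘ s = id. Then: (i) ⁅s(x), u⁆ ∈ 𝔥 for all x ∈ g, u ∈ 𝔥; (ii) ⁅s(⁅x,y⁆), u⁆ = ⁅s(x), ⁅s(y), u⁆⁆ − ⁅s(y), ⁅s(x), u⁆⁆ for all x,y ∈ g, u ∈ 𝔥; (iii) D̂(⁅s(x), u⁆) = ⁅s(D x), u⁆ + ⁅s(x), D̂ u⁆ + ⁅s(D x), D̂ u⁆ for all x ∈ g, u ∈ 𝔥. That is, ϱ(x)u := ⁅s(x), u⁆ is a representation of the difference Lie algebra (g,D) on 𝔥 with respect to K = D̂|_𝔥. -/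
/-- For an abelian extension `p : ĝ → g` of a difference Lie algebra `(g, D)` by `(𝔥, K)`
(`𝔥 = ker p` abelian and `D̂`-invariant), and a linear section `s` of `p`, the formula
`ϱ(x)u = ⁅s(x), u⁆` defines a representation of the difference Lie algebra `(g, D)` on `𝔥`
with respect to `K = D̂|_𝔥`: (i) `⁅s(x), u⁆ ∈ 𝔥`; (ii) `ϱ` is a Lie algebra representation;
(iii) the difference compatibility holds. -/
theorem section_gives_representation {k : Type*} [Field k]
    {ghat : Type*} [LieRing ghat] [LieAlgebra k ghat]
    {g : Type*} [LieRing g] [LieAlgebra k g]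
    (Dhat : ghat →ₗ[k] ghat)
    (hDhat : ∀ a b : ghat, Dhat ⁅a, b⁆ = ⁅Dhat a, b⁆ + ⁅a, Dhat b⁆ + ⁅Dhat a, Dhat b⁆)
    (D : g →ₗ[k] g)
    (hD : ∀ x y : g, D ⁅x, y⁆ = ⁅D x, y⁆ + ⁅x, D y⁆ + ⁅D x, D y⁆)
    (p : ghat →ₗ⁅k⁆ g) (hsurj : Function.Surjective p)
    (hcomm : ∀ a : ghat, p (Dhat a) = D (p a))
    (habelian : ∀ u v : ghat, p u = 0 → p v = 0 → ⁅u, v⁆ = 0)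
    (hinv : ∀ u : ghat, p u = 0 → p (Dhat u) = 0)
    (s : g →ₗ[k] ghat) (hs : ∀ x : g, p (s x) = x) :
    (∀ (x : g) (u : ghat), p u = 0 → p ⁅s x, u⁆ = 0) ∧
    (∀ (x y : g) (u : ghat), p u = 0 →
      ⁅s ⁅x, y⁆, u⁆ = ⁅s x, ⁅s y, u⁆⁆ - ⁅s y, ⁅s x, u⁆⁆) ∧
    (∀ (x : g) (u : ghat), p u = 0 →
      Dhat ⁅s x, u⁆ = ⁅s (D x), u⁆ + ⁅s x, Dhat u⁆ + ⁅s (D x), Dhat u⁆) := by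
  refine ⟨?_, ?_, ?_⟩
  · intro x u hu
    simp [LieHom.map_lie, hs, hu]
  · intro x y u hu
    have hk : p (s ⁅x, y⁆ - ⁅s x, s y⁆) = 0 := by
      simp [LieHom.map_lie, hs]
    have h0 : ⁅s ⁅x, y⁆ - ⁅s x, s y⁆, u⁆ = 0 := habelian _ _ hk hu
    have h1 : ⁅s ⁅x, y⁆, u⁆ = ⁅(⁅s x, s y⁆ : ghat), u⁆ := by
      rw [sub_lie, sub_eq_zero] at h0; exact h0
    rw [h1, lie_lie]
  · intro x u hu
    have hk : p (Dhat (s x) - s (D x)) = 0 := by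
      simp [hcomm, hs]
    have e1 : ⁅Dhat (s x) - s (D x), u⁆ = 0 := habelian _ _ hk hu
    have e2 : ⁅Dhat (s x) - s (D x), Dhat u⁆ = 0 := habelian _ _ hk (hinv u hu)
    have r1 : ⁅Dhat (s x), u⁆ = ⁅s (D x), u⁆ := by
      rw [sub_lie, sub_eq_zero] at e1; exact e1
    have r2 : ⁅Dhat (s x), Dhat u⁆ = ⁅s (D x), Dhat u⁆ := by
      rw [sub_lie, sub_eq_zero] at e2; exact e2
    rw [hDhat, r1, r2]
end

section
/- Let (ĝ, D̂) and (g, D) be difference Lie algebras over a field k and let p: ĝ → g be a surjective Lie algebra homomorphism with p ∘ D̂ = D ∘ p, whose kernel 𝔥 = ker p is abelian (⁅u,v⁆ = 0 for all u,v ∈ 𝔥) and satisfies D̂(𝔥) ⊆ 𝔥. Let s be a linear section of p and define ω(x,y) = ⁅s(x), s(y)⁆ − s(⁅x,y⁆) and χ(x) = D̂(s(x)) − s(D x). Then ω(x,y) ∈ 𝔥 and χ(x) ∈ 𝔥 for all x,y ∈ g, and (ω,χ) is a 2-cocycle: for all x,y,z ∈ g, (1) ⁅s(x), ω(y,z)⁆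 − ⁅s(y), ω(x,z)⁆ + ⁅s(z), ω(x,y)⁆ − ω(⁅x,y⁆, z) + ω(⁅x,z⁆, y) − ω(⁅y,z⁆, x) = 0; and (2) D̂(ω(x,y)) + χ(⁅x,y⁆) = ω(D x, y) + ω(x, D y) + ω(D x, D y) + ⁅s(x), χ(y)⁆ − ⁅s(y), χ(x)⁆ + ⁅s(D x), χ(y)⁆ − ⁅s(D y), χ(x)⁆. -/
/-- For an abelian extension `p : ĝ → g` of a difference Lie algebra `(g, D)` with linear
section `s`, the maps `ω(x,y) = ⁅s(x), s(y)⁆ − s(⁅x,y⁆)` and `χ(x) = D̂(s(x)) − s(D x)` take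
values in `𝔥 = ker p`, and `(ω, χ)` is a 2-cocycle of `(g, D)` with coefficients in the
induced representation `ϱ(x)u = ⁅s(x), u⁆`, `K = D̂|_𝔥`. -/
theorem section_gives_two_cocycle {k : Type*} [Field k]
    {ghat : Type*} [LieRing ghat] [LieAlgebra k ghat]
    {g : Type*} [LieRing g] [LieAlgebra k g]
    (Dhat : ghat →ₗ[k] ghat)
    (hDhat : ∀ a b : ghat, Dhat ⁅a, b⁆ = ⁅Dhat a, b⁆ + ⁅a, Dhat b⁆ + ⁅Dhat a, Dhat b⁆)
    (D : g →ₗ[k] g)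
    (hD : ∀ x y : g, D ⁅x, y⁆ = ⁅D x, y⁆ + ⁅x, D y⁆ + ⁅D x, D y⁆)
    (p : ghat →ₗ⁅k⁆ g) (hsurj : Function.Surjective p)
    (hcomm : ∀ a : ghat, p (Dhat a) = D (p a))
    (habelian : ∀ u v : ghat, p u = 0 → p v = 0 → ⁅u, v⁆ = 0)
    (hinv : ∀ u : ghat, p u = 0 → p (Dhat u) = 0)
    (s : g →ₗ[k] ghat) (hs : ∀ x : g, p (s x) = x)
    (ω : g → g → ghat) (hω : ∀ x y : g, ω x y = ⁅s x, s y⁆ - s ⁅x, y⁆)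
    (χ : g → ghat) (hχ : ∀ x : g, χ x = Dhat (s x) - s (D x)) :
    (∀ x y : g, p (ω x y) = 0) ∧
    (∀ x : g, p (χ x) = 0) ∧
    (∀ x y z : g,
      ⁅s x, ω y z⁆ - ⁅s y, ω x z⁆ + ⁅s z, ω x y⁆ -
        ω ⁅x, y⁆ z + ω ⁅x, z⁆ y - ω ⁅y, z⁆ x = 0) ∧
    (∀ x y : g,
      Dhat (ω x y) + χ ⁅x, y⁆ =
        ω (D x) y + ω x (D y) + ω (D x) (D y) +
        ⁅s x, χ y⁆ - ⁅s y, χ x⁆ + ⁅s (D x), χ y⁆ - ⁅s (D y), χ x⁆) := by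
  have hpω : ∀ x y : g, p (ω x y) = 0 := by
    intro x y
    rw [hω, map_sub, LieHom.map_lie, hs, hs, hs, sub_self]
  have hpχ : ∀ x : g, p (χ x) = 0 := by
    intro x
    rw [hχ, map_sub, hcomm, hs, hs, sub_self]
  refine ⟨hpω, hpχ, ?_, ?_⟩
  · intro x y z
    have hj : (⁅⁅x, y⁆, z⁆ : g) - ⁅⁅x, z⁆, y⁆ + ⁅⁅y, z⁆, x⁆ = 0 := by
      have h := lie_jacobi x y z
      rw [show (⁅z, x⁆ : g) = -⁅x, z⁆ by rw [← lie_skew], lie_neg] at h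
      rw [show (⁅⁅x, y⁆, z⁆ : g) = -⁅z, ⁅x, y⁆⁆ by rw [← lie_skew],
        show (⁅⁅x, z⁆, y⁆ : g) = -⁅y, ⁅x, z⁆⁆ by rw [← lie_skew],
        show (⁅⁅y, z⁆, x⁆ : g) = -⁅x, ⁅y, z⁆⁆ by rw [← lie_skew],
        ← neg_eq_zero, ← h]
      abel
    have hsj : s ⁅⁅y, z⁆, x⁆ = s ⁅⁅x, z⁆, y⁆ - s ⁅⁅x, y⁆, z⁆ := by
      rw [← map_sub]
      congr 1
      rw [← sub_eq_zero, ← hj]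
      abel
    have h1 : (⁅s z, ⁅s x, s y⁆⁆ : ghat) = ⁅s y, ⁅s x, s z⁆⁆ - ⁅s x, ⁅s y, s z⁆⁆ := by
      rw [show (⁅s z, ⁅s x, s y⁆⁆ : ghat) = -⁅⁅s x, s y⁆, s z⁆ by rw [← lie_skew],
        lie_lie]
      abel
    have h2 : (⁅s ⁅x, y⁆, s z⁆ : ghat) = -⁅s z, s ⁅x, y⁆⁆ := by rw [← lie_skew]
    have h3 : (⁅s ⁅x, z⁆, s y⁆ : ghat) = -⁅s y, s ⁅x, z⁆⁆ := by rw [← lie_skew]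
    have h4 : (⁅s ⁅y, z⁆, s x⁆ : ghat) = -⁅s x, s ⁅y, z⁆⁆ := by rw [← lie_skew]
    simp only [hω, lie_sub]
    rw [h1, h2, h3, h4, hsj]
    abel
  · intro x y
    have h0 : (⁅Dhat (s x) - s (D x), Dhat (s y) - s (D y)⁆ : ghat) = 0 := by
      apply habelian
      · have := hpχ x; rwa [hχ] at this
      · have := hpχ y; rwa [hχ] at this
    simp only [lie_sub, sub_lie] at h0
    have h0' : (⁅Dhat (s x), Dhat (s y)⁆ : ghat) =
        ⁅s (D x), Dhat (s y)⁆ + ⁅Dhat (s x), s (D y)⁆ - ⁅s (D x), s (D y)⁆ := by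
      rw [← sub_eq_zero, ← h0]
      abel
    have k1 : (⁅s y, Dhat (s x)⁆ : ghat) = -⁅Dhat (s x), s y⁆ := by rw [← lie_skew]
    have k2 : (⁅s y, s (D x)⁆ : ghat) = -⁅s (D x), s y⁆ := by rw [← lie_skew]
    have k3 : (⁅s (D y), Dhat (s x)⁆ : ghat) = -⁅Dhat (s x), s (D y)⁆ := by rw [← lie_skew]
    have k4 : (⁅s (D y), s (D x)⁆ : ghat) = -⁅s (D x), s (D y)⁆ := by rw [← lie_skew]
    simp only [hω, hχ, map_sub, hDhat, hD, map_add, lie_sub, sub_lie]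
    rw [h0', k1, k2, k3, k4]
    abel
end

section
/- Let (ĝ, D̂) and (g, D) be difference Lie algebras over a field k and let p: ĝ → g be a surjective Lie algebra homomorphism with p ∘ D̂ = D ∘ p, whose kernel 𝔥 = ker p is abelian (⁅u,v⁆ = 0 for all u,v ∈ 𝔥) and satisfies D̂(𝔥) ⊆ 𝔥. Let s and s' be two linear sections of p, with associated 2-cocycles ω(x,y) = ⁅s(x), s(y)⁆ − s(⁅x,y⁆), χ(x) = D̂(s(x)) − s(D x) and ω'(x,y) = ⁅s'(x), s'(y)⁆ − s'(⁅x,y⁆), χ'(x) = D̂(s'(x)) − s'(D x). Set N = s' − s (so N takes values in 𝔥). Then for all x,y ∈ g: ω'(x,y) − ω(x,y) = ⁅s(x), N(y)⁆ − ⁅s(y), N(x)⁆ − N(⁅x,y⁆) and χ'(x) − χ(x) = D̂(N(x)) − N(D x); i.e. the two cocycles differ by the coboundary of N, so they define the same cohomology class. -/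
/-- For an abelian extension `p : ĝ → g` of a difference Lie algebra `(g, D)`, the 2-cocycles
`(ω, χ)` and `(ω', χ')` associated to two linear sections `s` and `s'` differ by the
coboundary of `N = s' − s`, hence define the same cohomology class. -/
theorem cocycles_of_sections_differ_by_coboundary {k : Type*} [Field k]
    {ghat : Type*} [LieRing ghat] [LieAlgebra k ghat]
    {g : Type*} [LieRing g] [LieAlgebra k g]
    (Dhat : ghat →ₗ[k] ghat)
    (hDhat : ∀ a b : ghat, Dhat ⁅a, b⁆ = ⁅Dhat a, b⁆ + ⁅a, Dhat b⁆ + ⁅Dhat a, Dhat b⁆)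
    (D : g →ₗ[k] g)
    (hD : ∀ x y : g, D ⁅x, y⁆ = ⁅D x, y⁆ + ⁅x, D y⁆ + ⁅D x, D y⁆)
    (p : ghat →ₗ⁅k⁆ g) (hsurj : Function.Surjective p)
    (hcomm : ∀ a : ghat, p (Dhat a) = D (p a))
    (habelian : ∀ u v : ghat, p u = 0 → p v = 0 → ⁅u, v⁆ = 0)
    (hinv : ∀ u : ghat, p u = 0 → p (Dhat u) = 0)
    (s s' : g →ₗ[k] ghat) (hs : ∀ x : g, p (s x) = x) (hs' : ∀ x : g, p (s' x) = x)
    (ω : g → g → ghat) (hω : ∀ x y : g, ω x y = ⁅s x, s y⁆ - s ⁅x, y⁆)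
    (χ : g → ghat) (hχ : ∀ x : g, χ x = Dhat (s x) - s (D x))
    (ω' : g → g → ghat) (hω' : ∀ x y : g, ω' x y = ⁅s' x, s' y⁆ - s' ⁅x, y⁆)
    (χ' : g → ghat) (hχ' : ∀ x : g, χ' x = Dhat (s' x) - s' (D x))
    (N : g → ghat) (hN : ∀ x : g, N x = s' x - s x) :
    (∀ x : g, p (N x) = 0) ∧
    (∀ x y : g, ω' x y - ω x y = ⁅s x, N y⁆ - ⁅s y, N x⁆ - N ⁅x, y⁆) ∧
    (∀ x : g, χ' x - χ x = Dhat (N x) - N (D x)) := by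
  have hpN : ∀ x : g, p (N x) = 0 := by
    intro x; rw [hN, map_sub, hs, hs', sub_self]
  refine ⟨hpN, ?_, ?_⟩
  · intro x y
    have hs'x : s' x = s x + N x := by rw [hN]; abel
    have hs'y : s' y = s y + N y := by rw [hN]; abel
    have hNN : ⁅N x, N y⁆ = 0 := habelian _ _ (hpN x) (hpN y)
    rw [hω, hω', hs'x, hs'y, hN ⁅x, y⁆, add_lie, lie_add, lie_add, hNN,
      ← lie_skew (s y) (N x)]
    abel
  · intro x
    rw [hχ, hχ', hN, hN, map_sub]
    abel
end
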